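/- Let 0 < δ < 1 and let β = 1 + exp(−1/δ) / (2 − 2·exp(−1/δ)) > 1. Then there exists a polynomial φ with complex coefficients such that: (1) φ(0) = 0 and φ(1) = 1; and (2) for every z ∈ ℂ with |z| ≤ β, the value φ(z) lies in the 2δ-strip of [0,1], i.e., |Im φ(z)| ≤ 2δ and −2δ ≤ Re φ(z) ≤ 1 + 2δ. -/

import Mathlib

open Finset Polynomial


lemma tail_bound_aux (n : ℕ) (w : ℂ) (r : ℝ) (hw : ‖w‖ ≤ r) (hr : r < 1) :
    ‖(-Complex.log (1 - w)) - ∑ k ∈ Finset.range (n+1), w^k/(k:ℂ)‖ ≤ r^(n+1)/(1-r) := by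
  have hr0 : 0 ≤ r := le_trans (norm_nonneg w) hw
  have hw1 : ‖w‖ < 1 := lt_of_le_of_lt (by exact hw) hr
  have hs := Complex.hasSum_taylorSeries_neg_log hw1
  have hsum := hs.summable
  have key := Summable.sum_add_tsum_nat_add (f := fun k : ℕ => w^k/(k:ℂ)) (n+1) hsum
  rw [hs.tsum_eq] at key
  have hdiff : -Complex.log (1-w) - ∑ k ∈ Finset.range (n+1), w^k/(k:ℂ)
      = ∑' i : ℕ, w^(i+(n+1))/((i+(n+1) : ℕ):ℂ) := by
    rw [← key]; ring
  rw [hdiff]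
  have hmaj : ∀ i : ℕ, ‖w^(i+(n+1))/((i+(n+1):ℕ):ℂ)‖ ≤ r^(n+1) * r^i := by
    intro i
    rw [norm_div, norm_pow]
    have h1 : (1:ℝ) ≤ ‖((i+(n+1):ℕ):ℂ)‖ := by
      rw [Complex.norm_natCast]
      exact_mod_cast Nat.one_le_iff_ne_zero.mpr (by omega)
    calc ‖w‖^(i+(n+1)) / ‖((i+(n+1):ℕ):ℂ)‖ ≤ ‖w‖^(i+(n+1)) / 1 := by
          gcongr
      _ = ‖w‖^(i+(n+1)) := by ring
      _ ≤ r^(i+(n+1)) := by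
          apply pow_le_pow_left₀ (norm_nonneg w) (by exact hw)
      _ = r^(n+1) * r^i := by rw [pow_add]; ring
  have hgeo : Summable (fun i : ℕ => r^(n+1) * r^i) :=
    (summable_geometric_of_lt_one hr0 hr).mul_left _
  have hnsum : Summable (fun i : ℕ => ‖w^(i+(n+1))/((i+(n+1):ℕ):ℂ)‖) :=
    Summable.of_nonneg_of_le (fun i => norm_nonneg _) hmaj hgeo
  calc ‖∑' i : ℕ, w^(i+(n+1))/((i+(n+1) : ℕ):ℂ)‖
      ≤ ∑' i : ℕ, ‖w^(i+(n+1))/((i+(n+1):ℕ):ℂ)‖ := norm_tsum_le_tsum_norm hnsum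
    _ ≤ ∑' i : ℕ, r^(n+1) * r^i := Summable.tsum_le_tsum hmaj hnsum hgeo
    _ = r^(n+1) * (1-r)⁻¹ := by rw [tsum_mul_left, tsum_geometric_of_lt_one hr0 hr]
    _ = r^(n+1)/(1-r) := by ring

theorem exists_polynomial_disk_to_strip (δ : ℝ) (hδ0 : 0 < δ) (hδ1 : δ < 1) :
    ∃ φ : Polynomial ℂ, φ.eval 0 = 0 ∧ φ.eval 1 = 1 ∧
      ∀ z : ℂ, ‖z‖ ≤ 1 + Real.exp (-(1 / δ)) / (2 - 2 * Real.exp (-(1 / δ))) →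
        |(φ.eval z).im| ≤ 2 * δ ∧ -(2 * δ) ≤ (φ.eval z).re ∧ (φ.eval z).re ≤ 1 + 2 * δ := by
  set ε := Real.exp (-(1/δ)) with hεdef
  have hε0 : 0 < ε := Real.exp_pos _
  have hδinv : (1:ℝ) < 1/δ := by rw [lt_div_iff₀ hδ0]; linarith
  have hεh : ε < 1/2 := by
    have h1 : ε < Real.exp (-1) := Real.exp_lt_exp.mpr (by linarith)
    have h2 : Real.exp (-1) < 1/2 := by
      rw [Real.exp_neg, inv_lt_comm₀ (Real.exp_pos 1) (by norm_num)]
      have h3 : ((1:ℝ)/2)⁻¹ = 2 := by norm_num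
      rw [h3]
      linarith [Real.exp_one_gt_d9]
    linarith
  have hlogε : Real.log ε = -(1/δ) := Real.log_exp _
  set α : ℝ := 1 - ε with hαdef
  have hα0 : 0 < α := by simp only [hαdef]; linarith
  set β : ℝ := 1 + ε/(2-2*ε) with hβdef
  have hden : (0:ℝ) < 2 - 2*ε := by linarith
  have hαβ : α * β = 1 - ε/2 := by
    rw [hαdef, hβdef, mul_add, mul_one, mul_div_assoc', show (1-ε)*ε/(2-2*ε) = ε/2 by rw [div_eq_iff hden.ne']; ring]; ring
  have hβ1 : 1 ≤ β := by
    rw [hβdef]; have : 0 ≤ ε/(2-2*ε) := by positivity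
    linarith
  have hβ2 : β ≤ 2 := by
    rw [hβdef]
    have : ε/(2-2*ε) ≤ 1 := by rw [div_le_one hden]; linarith
    linarith
  set n := ⌈(2/ε) * Real.log (20/ε)⌉₊ with hndef
  set S : ℂ := ∑ k ∈ Finset.range (n+1), (δ:ℂ) * (α:ℂ)^k / (k:ℂ) with hSdef
  set φ : Polynomial ℂ :=
    (∑ k ∈ Finset.range (n+1), Polynomial.C ((δ:ℂ) * (α:ℂ)^k / (k:ℂ)) * Polynomial.X ^ k)
      + Polynomial.C (1 - S) * Polynomial.X with hφdef
  have heval : ∀ z : ℂ, φ.eval z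
      = (δ:ℂ) * (∑ k ∈ Finset.range (n+1), ((α:ℂ)*z)^k/(k:ℂ)) + (1-S)*z := by
    intro z
    rw [hφdef]
    simp only [Polynomial.eval_add, Polynomial.eval_finset_sum, Polynomial.eval_mul,
      Polynomial.eval_C, Polynomial.eval_pow, Polynomial.eval_X, Finset.mul_sum]
    congr 1
    refine Finset.sum_congr rfl fun k _ => ?_
    rw [mul_pow]; ring
  -- eval at 0
  have hev0 : φ.eval 0 = 0 := by
    rw [heval 0]
    have : ∑ k ∈ Finset.range (n+1), ((α:ℂ)*0)^k/(k:ℂ) = 0 := by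
      refine Finset.sum_eq_zero fun k _ => ?_
      rcases k with _ | k
      · simp
      · simp [pow_succ]
    rw [this]; ring
  have hev1 : φ.eval 1 = 1 := by
    rw [heval 1]
    have : (δ:ℂ) * (∑ k ∈ Finset.range (n+1), ((α:ℂ)*1)^k/(k:ℂ)) = S := by
      rw [hSdef, Finset.mul_sum]
      refine Finset.sum_congr rfl fun k _ => ?_
      rw [mul_one]; ring
    rw [this]; ring
  refine ⟨φ, hev0, hev1, ?_⟩
  -- tail bound at radius 1 - ε/2
  have hr1 : (1:ℝ) - ε/2 < 1 := by linarith
  have htailT : (1-ε/2)^(n+1)/(1-(1-ε/2)) ≤ 1/10 := by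
    have hn : (2/ε) * Real.log (20/ε) ≤ (n:ℝ) := Nat.le_ceil _
    have e1 : (1:ℝ)-ε/2 ≤ Real.exp (-(ε/2)) := by
      have := Real.add_one_le_exp (-(ε/2)); linarith
    have e2 : (1-ε/2)^(n+1) ≤ Real.exp (-(ε/2))^(n+1) :=
      pow_le_pow_left₀ (by linarith) e1 _
    have e3 : Real.exp (-(ε/2))^(n+1) = Real.exp (-(ε/2)*(n+1)) := by
      rw [← Real.exp_nat_mul]
      congr 1
      push_cast
      ring
    have hlog20 : Real.log (20/ε) ≤ (ε/2) * (n+1) := by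
      have h5 : (ε/2) * ((2/ε) * Real.log (20/ε)) = Real.log (20/ε) := by
        field_simp
      calc Real.log (20/ε) = (ε/2) * ((2/ε) * Real.log (20/ε)) := h5.symm
        _ ≤ (ε/2) * (n+1) := by
            apply mul_le_mul_of_nonneg_left (by linarith) (by positivity)
    have e4 : Real.exp (-(ε/2)*(n+1)) ≤ ε/20 := by
      have : Real.exp (-(ε/2)*(n+1)) ≤ Real.exp (Real.log (ε/20)) := by
        apply Real.exp_le_exp.mpr
        have : Real.log (ε/20) = - Real.log (20/ε) := by
          rw [Real.log_div hε0.ne' (by norm_num), Real.log_div (by norm_num) hε0.ne']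
          ring
        rw [this]; linarith
      rwa [Real.exp_log (by positivity)] at this
    have e5 : (1-ε/2)^(n+1) ≤ ε/20 := by
      calc (1-ε/2)^(n+1) ≤ Real.exp (-(ε/2))^(n+1) := e2
        _ = Real.exp (-(ε/2)*(n+1)) := e3
        _ ≤ ε/20 := e4
    have h6 : (1:ℝ)-(1-ε/2) = ε/2 := by ring
    rw [h6]
    calc (1-ε/2)^(n+1)/(ε/2) ≤ (ε/20)/(ε/2) := by gcongr
      _ = 1/10 := by field_simp; ring
  have htail : ∀ w : ℂ, ‖w‖ ≤ 1 - ε/2 →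
      ‖(-Complex.log (1-w)) - ∑ k ∈ Finset.range (n+1), w^k/(k:ℂ)‖ ≤ 1/10 := by
    intro w hww
    exact (tail_bound_aux n w (1-ε/2) hww hr1).trans htailT
  -- bound on 1 - S
  have hδC : (δ:ℂ) ≠ 0 := Complex.ofReal_ne_zero.mpr hδ0.ne'
  have hS : ‖(1:ℂ) - S‖ ≤ δ/10 := by
    have habsα : ‖((α:ℂ))‖ ≤ 1 - ε/2 := by
      rw [Complex.norm_real, Real.norm_eq_abs, abs_of_pos hα0, hαdef]; linarith
    have h1 := htail (α:ℂ) habsα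
    have hlog : Complex.log (1 - (α:ℂ)) = ((-(1/δ) : ℝ) : ℂ) := by
      have h2 : (1 : ℂ) - (α:ℂ) = ((ε:ℝ):ℂ) := by
        rw [hαdef]; push_cast; ring
      rw [h2, ← Complex.ofReal_log hε0.le, hlogε]
    have hmul : S = (δ:ℂ) * ∑ k ∈ Finset.range (n+1), (α:ℂ)^k/(k:ℂ) := by
      rw [hSdef, Finset.mul_sum]
      exact Finset.sum_congr rfl fun k _ => by ring
    have h3 : (1:ℂ) - S
        = (δ:ℂ) * ((-Complex.log (1-(α:ℂ))) - ∑ k ∈ Finset.range (n+1), (α:ℂ)^k/(k:ℂ)) := by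
      rw [hmul, hlog]
      push_cast
      have h4 : (δ:ℂ) * - -(1/δ) = 1 := by field_simp
      rw [mul_sub, h4]
    rw [h3, norm_mul, Complex.norm_real, Real.norm_eq_abs, abs_of_pos hδ0]
    calc δ * ‖(-Complex.log (1-(α:ℂ))) - ∑ k ∈ Finset.range (n+1), (α:ℂ)^k/(k:ℂ)‖
        ≤ δ * (1/10) := by apply mul_le_mul_of_nonneg_left h1 hδ0.le
      _ = δ/10 := by ring
  -- main estimate
  intro z hz
  have hzβ : ‖z‖ ≤ β := hz
  set w : ℂ := (α:ℂ) * z with hwdef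
  have hw : ‖w‖ ≤ 1 - ε/2 := by
    rw [hwdef, norm_mul, Complex.norm_real, Real.norm_eq_abs, abs_of_pos hα0, ← hαβ]
    exact mul_le_mul_of_nonneg_left hzβ hα0.le
  set Lg : ℂ := -Complex.log (1-w) with hLgdef
  have hdecomp : φ.eval z = (δ:ℂ)*Lg
      + ((δ:ℂ) * ((∑ k ∈ Finset.range (n+1), w^k/(k:ℂ)) - Lg) + (1-S)*z) := by
    rw [heval z, ← hwdef]; ring
  set err : ℂ := (δ:ℂ) * ((∑ k ∈ Finset.range (n+1), w^k/(k:ℂ)) - Lg) + (1-S)*z with herrdef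
  have herr : ‖err‖ ≤ 3*δ/10 := by
    have h1 : ‖(∑ k ∈ Finset.range (n+1), w^k/(k:ℂ)) - Lg‖ ≤ 1/10 := by
      rw [norm_sub_rev]; exact htail w hw
    have h2 : ‖(1-S)*z‖ ≤ (δ/10) * 2 := by
      rw [norm_mul]
      apply mul_le_mul hS (by linarith) (norm_nonneg z) (by positivity)
    calc ‖err‖ ≤ ‖(δ:ℂ) * ((∑ k ∈ Finset.range (n+1), w^k/(k:ℂ)) - Lg)‖ + ‖(1-S)*z‖ :=
          norm_add_le _ _
      _ ≤ δ * (1/10) + (δ/10)*2 := by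
          rw [norm_mul, Complex.norm_real, Real.norm_eq_abs, abs_of_pos hδ0]
          exact add_le_add (mul_le_mul_of_nonneg_left h1 hδ0.le) h2
      _ = 3*δ/10 := by ring
  have herr_im : |err.im| ≤ 3*δ/10 := le_trans (Complex.abs_im_le_norm err) herr
  have herr_re : |err.re| ≤ 3*δ/10 := le_trans (Complex.abs_re_le_norm err) herr
  -- properties of the main term
  have hre1w : (0:ℝ) < (1-w).re := by
    have : w.re ≤ ‖w‖ := Complex.re_le_norm w
    simp only [Complex.sub_re, Complex.one_re]
    linarith
  have habs1w_lo : ε/2 ≤ ‖1-w‖ := by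
    have h1 : ‖(1:ℂ)‖ ≤ ‖1-w‖ + ‖w‖ := by
      calc ‖(1:ℂ)‖ = ‖(1-w) + w‖ := by ring_nf
        _ ≤ ‖1-w‖ + ‖w‖ := norm_add_le _ _
    simp only [norm_one] at h1
    linarith
  have habs1w_hi : ‖1-w‖ ≤ 2 := by
    have h1 : ‖1-w‖ ≤ ‖(1:ℂ)‖ + ‖w‖ := by
      exact norm_sub_le (1:ℂ) w
    simp only [norm_one] at h1
    linarith
  have hLg_im : |Lg.im| ≤ Real.pi/2 := by
    rw [hLgdef, Complex.neg_im, abs_neg, Complex.log_im]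
    exact Complex.abs_arg_le_pi_div_two_iff.mpr hre1w.le
  have hlog2 : Real.log 2 < 0.6931471808 := Real.log_two_lt_d9
  have hlog2' : 0 < Real.log 2 := Real.log_pos (by norm_num)
  have hLg_re_hi : Lg.re ≤ 1/δ + Real.log 2 := by
    rw [hLgdef, Complex.neg_re, Complex.log_re]
    have h1 : Real.log (ε/2) ≤ Real.log ‖1-w‖ :=
      Real.log_le_log (by positivity) habs1w_lo
    have h2 : Real.log (ε/2) = -(1/δ) - Real.log 2 := by
      rw [Real.log_div hε0.ne' (by norm_num), hlogε]
    rw [h2] at h1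
    linarith
  have hLg_re_lo : -Real.log 2 ≤ Lg.re := by
    rw [hLgdef, Complex.neg_re, Complex.log_re]
    have h1 : Real.log ‖1-w‖ ≤ Real.log 2 := by
      apply Real.log_le_log (by linarith) habs1w_hi
    linarith
  -- put together
  have him : (φ.eval z).im = δ * Lg.im + err.im := by
    rw [hdecomp, Complex.add_im]
    simp [Complex.mul_im]
  have hre : (φ.eval z).re = δ * Lg.re + err.re := by
    rw [hdecomp, Complex.add_re]
    simp [Complex.mul_re]
  have hpi : Real.pi < 3.15 := Real.pi_lt_d2
  constructor
  · rw [him]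
    have h1 : |δ * Lg.im| ≤ δ * (Real.pi/2) := by
      rw [abs_mul, abs_of_pos hδ0]
      exact mul_le_mul_of_nonneg_left hLg_im hδ0.le
    have h2 : δ * (Real.pi/2) ≤ δ * (8/5) :=
      mul_le_mul_of_nonneg_left (by linarith) hδ0.le
    calc |δ * Lg.im + err.im| ≤ |δ * Lg.im| + |err.im| := abs_add_le _ _
      _ ≤ δ * (8/5) + 3*δ/10 := by linarith
      _ ≤ 2 * δ := by linarith
  constructor
  · rw [hre]
    have h1 : δ * (-Real.log 2) ≤ δ * Lg.re :=
      mul_le_mul_of_nonneg_left hLg_re_lo hδ0.le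
    have h1' : δ * (-1) ≤ δ * (-Real.log 2) :=
      mul_le_mul_of_nonneg_left (by linarith) hδ0.le
    have h2 : -(3*δ/10) ≤ err.re := neg_le_of_abs_le herr_re
    have h5 : δ * (-1) = -δ := by ring
    linarith
  · rw [hre]
    have h1 : δ * Lg.re ≤ δ * (1/δ + Real.log 2) :=
      mul_le_mul_of_nonneg_left hLg_re_hi hδ0.le
    have h3 : δ * (1/δ + Real.log 2) = 1 + δ * Real.log 2 := by
      field_simp
    have h4 : δ * Real.log 2 ≤ δ * 1 :=
      mul_le_mul_of_nonneg_left (by linarith) hδ0.le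
    have h2 : err.re ≤ 3*δ/10 := le_of_abs_le herr_re
    linarith
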